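/- For N ≥ L and indices 1 ≤ l_1 < ... < l_L ≤ N with x_1,...,x_N pairwise distinct, the Vandermonde determinant of the N−L variables obtained by removing x_{l_1},...,x_{l_L} equals ∏_{j=1}^L (-1)^{N - l_j} · Δ_N(x_1,...,x_N) · Δ_L(x_{l_1},...,x_{l_L}) / ∏_{j=1}^L ∏_{n=1, n≠l_j}^N (x_n - x_{l_j}). -/

import Mathlib

/-- The Vandermonde determinant in product form. -/
def Vand {K : ℕ} (v : Fin K → ℂ) : ℂ := ∏ i : Fin K, ∏ j ∈ Finset.Ioi i, (v i - v j)

namespace VRaux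
open Finset

noncomputable def Pm {N : ℕ} (x : Fin N → ℂ) (A B : Finset (Fin N)) : ℂ :=
  ∏ a ∈ A, ∏ b ∈ B.filter (fun b => a < b), (x a - x b)

lemma vand_eq {N m : ℕ} (x : Fin N → ℂ) (e : Fin m → Fin N) (he : StrictMono e) :
    Vand (x ∘ e) = Pm x (Finset.image e Finset.univ) (Finset.image e Finset.univ) := by
  unfold Vand Pm
  rw [Finset.prod_image (fun a _ b _ h => he.injective h)]
  refine (Finset.prod_congr rfl fun i _ => ?_).symm
  have hset : (Finset.image e Finset.univ).filter (fun b => e i < b)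
      = Finset.image e (Finset.Ioi i) := by
    ext b
    simp only [Finset.mem_filter, Finset.mem_image, Finset.mem_Ioi, Finset.mem_univ, true_and]
    constructor
    · rintro ⟨⟨j, rfl⟩, h⟩; exact ⟨j, he.lt_iff_lt.mp h, rfl⟩
    · rintro ⟨j, hj, rfl⟩; exact ⟨⟨j, rfl⟩, he hj⟩
  rw [hset, Finset.prod_image (fun a _ b _ h => he.injective h)]
  rfl

lemma Pm_left_union {N : ℕ} (x : Fin N → ℂ) {A B : Finset (Fin N)} (C : Finset (Fin N))
    (h : Disjoint A B) : Pm x (A ∪ B) C = Pm x A C * Pm x B C :=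
  Finset.prod_union h

lemma Pm_right_union {N : ℕ} (x : Fin N → ℂ) (A : Finset (Fin N)) {B C : Finset (Fin N)}
    (h : Disjoint B C) : Pm x A (B ∪ C) = Pm x A B * Pm x A C := by
  unfold Pm
  rw [← Finset.prod_mul_distrib]
  refine Finset.prod_congr rfl fun a _ => ?_
  rw [Finset.filter_union, Finset.prod_union (Finset.disjoint_filter_filter h)]

lemma col_eq {N : ℕ} (x : Fin N → ℂ) (A B : Finset (Fin N)) :
    ∏ a ∈ A, ∏ b ∈ B.filter (fun b => b < a), (x b - x a) = Pm x B A := by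
  unfold Pm
  exact Finset.prod_comm' (fun a b => by simp only [Finset.mem_filter]; tauto)

lemma Pm_ne_zero {N : ℕ} (x : Fin N → ℂ) (hx : Function.Injective x) (A B : Finset (Fin N)) :
    Pm x A B ≠ 0 := by
  unfold Pm
  apply Finset.prod_ne_zero_iff.2
  intro a _
  apply Finset.prod_ne_zero_iff.2
  intro b hb
  have : a ≠ b := (Finset.mem_filter.mp hb).2.ne
  exact sub_ne_zero.2 fun h => this (hx h)

end VRaux

/-- reduced Vandermonde determinant. For `N ≥ L`, strictly increasing indices
`l 1 < ... < l L` and pairwise distinct `x 1, ..., x N`, the Vandermonde determinant of the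
`N - L` variables obtained by removing `x (l 1), ..., x (l L)` (in increasing index order)
equals `∏_j (-1)^{N - l_j} · Δ_N(x) · Δ_L(x_{l_1},...,x_{l_L}) / ∏_j ∏_{n ≠ l_j} (x n - x (l j))`.
(Here indices are zero-based, so the one-based exponent `N - l_j` becomes `N - 1 - l j`.) -/
theorem vandermonde_reduced (N L : ℕ) (hL : L ≤ N) (x : Fin N → ℂ)
    (hx : Function.Injective x) (l : Fin L → Fin N) (hl : StrictMono l)
    (hcard : ((Finset.image l Finset.univ)ᶜ : Finset (Fin N)).card = N - L) :
    Vand (x ∘ (Finset.image l Finset.univ)ᶜ.orderEmbOfFin hcard)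
      = (∏ j : Fin L, (-1 : ℂ) ^ (N - 1 - (l j : ℕ))) * Vand x * Vand (x ∘ l) /
          ∏ j : Fin L, ∏ n ∈ Finset.univ.erase (l j), (x n - x (l j)) := by
  classical
  set S := Finset.image l Finset.univ with hS
  have hTS : Disjoint S Sᶜ := disjoint_compl_right
  have himg : Finset.image (⇑(Sᶜ.orderEmbOfFin hcard)) Finset.univ = Sᶜ := by
    apply Finset.coe_injective
    rw [Finset.coe_image, Finset.coe_univ, Set.image_univ, Finset.range_orderEmbOfFin]
  have hVT : Vand (x ∘ Sᶜ.orderEmbOfFin hcard) = VRaux.Pm x Sᶜ Sᶜ := by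
    rw [VRaux.vand_eq x _ (Sᶜ.orderEmbOfFin hcard).strictMono, himg]
  have hVx : Vand x = VRaux.Pm x Finset.univ Finset.univ := by
    have h := VRaux.vand_eq x id strictMono_id
    simpa [Finset.image_id] using h
  have hVS : Vand (x ∘ l) = VRaux.Pm x S S := VRaux.vand_eq x l hl
  have hsplit : VRaux.Pm x Finset.univ Finset.univ
      = (VRaux.Pm x S S * VRaux.Pm x S Sᶜ) * (VRaux.Pm x Sᶜ S * VRaux.Pm x Sᶜ Sᶜ) := by
    rw [← Finset.union_compl S, VRaux.Pm_left_union x _ hTS,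
      VRaux.Pm_right_union x S hTS, VRaux.Pm_right_union x Sᶜ hTS]
  have herase : ∀ a : Fin N, Finset.univ.erase a
      = Finset.univ.filter (fun b => a < b) ∪ Finset.univ.filter (fun b => b < a) := by
    intro a; ext b
    simp only [Finset.mem_erase, Finset.mem_union, Finset.mem_filter, Finset.mem_univ,
      true_and, and_true]
    exact ⟨fun h => h.symm.lt_or_gt, fun h => h.elim (fun h => h.ne') (fun h => h.ne)⟩
  have hdisj2 : ∀ a : Fin N,
      Disjoint (Finset.univ.filter (fun b => a < b)) (Finset.univ.filter (fun b => b < a)) := by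
    intro a
    rw [Finset.disjoint_left]
    intro b h1 h2
    exact absurd (Finset.mem_filter.mp h2).2 (lt_asymm (Finset.mem_filter.mp h1).2)
  have hcardIoi : ∀ a : Fin N, (Finset.univ.filter (fun b => a < b)).card = N - 1 - a := by
    intro a
    have h : Finset.univ.filter (fun b => a < b) = Finset.Ioi a := by
      ext b; simp
    rw [h, Fin.card_Ioi]
  have hD : (∏ j : Fin L, ∏ n ∈ Finset.univ.erase (l j), (x n - x (l j)))
      = (∏ j : Fin L, (-1 : ℂ) ^ (N - 1 - (l j : ℕ))) *
        ((VRaux.Pm x S S * VRaux.Pm x S Sᶜ) * (VRaux.Pm x S S * VRaux.Pm x Sᶜ S)) := by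
    have step : ∀ j : Fin L, ∏ n ∈ Finset.univ.erase (l j), (x n - x (l j))
        = (-1 : ℂ) ^ (N - 1 - (l j : ℕ)) *
          ((∏ n ∈ Finset.univ.filter (fun b => l j < b), (x (l j) - x n)) *
           (∏ n ∈ Finset.univ.filter (fun b => b < l j), (x n - x (l j)))) := by
      intro j
      rw [herase (l j), Finset.prod_union (hdisj2 (l j))]
      have h1 : ∏ n ∈ Finset.univ.filter (fun b => l j < b), (x n - x (l j))
          = (-1 : ℂ) ^ (N - 1 - (l j : ℕ)) *
            ∏ n ∈ Finset.univ.filter (fun b => l j < b), (x (l j) - x n) := by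
        rw [← hcardIoi (l j), ← Finset.prod_const, ← Finset.prod_mul_distrib]
        exact Finset.prod_congr rfl fun n _ => by ring
      rw [h1]; ring
    rw [Finset.prod_congr rfl (fun j _ => step j), Finset.prod_mul_distrib,
      Finset.prod_mul_distrib]
    congr 1
    congr 1
    · rw [← VRaux.Pm_right_union x S hTS, Finset.union_compl]
      unfold VRaux.Pm
      rw [hS, Finset.prod_image (fun a _ b _ h => hl.injective h)]
    · rw [← VRaux.Pm_left_union x _ hTS, Finset.union_compl,
        ← VRaux.col_eq x S Finset.univ, hS,
        Finset.prod_image (fun a _ b _ h => hl.injective h)]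
  have hsign : (∏ j : Fin L, (-1 : ℂ) ^ (N - 1 - (l j : ℕ))) ≠ 0 :=
    Finset.prod_ne_zero_iff.2 fun j _ => pow_ne_zero _ (by norm_num)
  have hP : ∀ A B : Finset (Fin N), VRaux.Pm x A B ≠ 0 := VRaux.Pm_ne_zero x hx
  rw [hVT, hVx, hVS, hD, hsplit, eq_div_iff
    (mul_ne_zero hsign (mul_ne_zero (mul_ne_zero (hP _ _) (hP _ _))
      (mul_ne_zero (hP _ _) (hP _ _))))]
  ring
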